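/- Every Baire strictly fragmentable topological space X contains a dense G_δ subset G such that G, with the subspace topology, is metrizable (in fact the subspace topology on G is generated by the fragmenting metric). -/

import Mathlib

open Topology Set

universe u v

/-- `f` is quasicontinuous at `x`. -/
def QuasiContinuousAt {X : Type*} {Y : Type*} [TopologicalSpace X] [TopologicalSpace Y]
    (f : X → Y) (x : X) : Prop :=
  ∀ Ox ∈ nhds x, ∀ Oy ∈ nhds (f x),
    ∃ U : Set X, IsOpen U ∧ U.Nonempty ∧ U ⊆ Ox ∧ f '' U ⊆ Oy

/-- `f` is quasicontinuous. -/
def QuasiContinuous {X Y : Type*} [TopologicalSpace X] [TopologicalSpace Y] (f : X → Y) : Prop :=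
  ∀ x, QuasiContinuousAt f x

/-- The set of continuity points of a map. -/
def ContinuityPoints {Z X : Type*} [TopologicalSpace Z] [TopologicalSpace X] (f : Z → X) :
    Set Z :=
  {z | ContinuousAt f z}

/-- A multivalued map (represented as `Φ : Z → Set X`) is usco if it has nonempty compact
values and is upper semicontinuous. -/
def IsUsco {Z X : Type*} [TopologicalSpace Z] [TopologicalSpace X] (Φ : Z → Set X) : Prop :=
  (∀ z, (Φ z).Nonempty) ∧ (∀ z, IsCompact (Φ z)) ∧
    ∀ U : Set X, IsOpen U → IsOpen {z | Φ z ⊆ U}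

/-- A minimal usco map. -/
def IsMinimalUsco {Z X : Type*} [TopologicalSpace Z] [TopologicalSpace X] (Φ : Z → Set X) :
    Prop :=
  IsUsco Φ ∧ ∀ Ψ : Z → Set X, IsUsco Ψ → (∀ z, Ψ z ⊆ Φ z) → Ψ = Φ

/-- `Φ` is single-valued at `z`. -/
def SingleValuedAt {Z X : Type*} (Φ : Z → Set X) (z : Z) : Prop := ∃ x, Φ z = {x}

/-- A class of topological spaces (in universe `u`). -/
def SpaceClass : Type (u + 1) := ∀ Z : Type u, TopologicalSpace Z → Prop

/-- All members of the class are Baire spaces. -/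
def IsBaireClass (P : SpaceClass.{u}) : Prop :=
  ∀ (Z : Type u) [tZ : TopologicalSpace Z], P Z tZ → BaireSpace Z

/-- The class is closed under taking open subspaces. -/
def ClosedUnderOpenSubspaces (P : SpaceClass.{u}) : Prop :=
  ∀ (Z : Type u) [tZ : TopologicalSpace Z], P Z tZ →
    ∀ U : Set Z, IsOpen U → P ↥U inferInstance

/-- The class is closed under taking dense `Gδ`-subspaces. -/
def ClosedUnderDenseGdelta (P : SpaceClass.{u}) : Prop :=
  ∀ (Z : Type u) [tZ : TopologicalSpace Z], P Z tZ →
    ∀ S : Set Z, Dense S → IsGδ S → P ↥S inferInstance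

/-- The class is closed under taking dense Baire subspaces. -/
def ClosedUnderDenseBaire (P : SpaceClass.{u}) : Prop :=
  ∀ (Z : Type u) [tZ : TopologicalSpace Z], P Z tZ →
    ∀ S : Set Z, Dense S → BaireSpace ↥S → P ↥S inferInstance

/-- `X` is `𝒞`-Piotrowski: every quasicontinuous map from a nonempty member of the class `𝒞`
to `X` has a continuity point. -/
def IsPiotrowskiFor (P : SpaceClass.{u}) (X : Type v) [TopologicalSpace X] : Prop :=
  ∀ (Z : Type u) [tZ : TopologicalSpace Z], P Z tZ → Nonempty Z →
    ∀ f : Z → X, QuasiContinuous f → ∃ z, ContinuousAt f z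

/-- `X` is strong `𝒞`-Piotrowski: for every quasicontinuous map from a member of `𝒞` to `X`
the set of continuity points is comeager. -/
def IsStrongPiotrowskiFor (P : SpaceClass.{u}) (X : Type v) [TopologicalSpace X] : Prop :=
  ∀ (Z : Type u) [tZ : TopologicalSpace Z], P Z tZ →
    ∀ f : Z → X, QuasiContinuous f → ContinuityPoints f ∈ residual Z

/-- `X` is `𝒞`-Stegall. -/
def IsStegallFor (P : SpaceClass.{u}) (X : Type v) [TopologicalSpace X] : Prop :=
  ∀ (Z : Type u) [tZ : TopologicalSpace Z], P Z tZ → Nonempty Z →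
    ∀ Φ : Z → Set X, IsMinimalUsco Φ → ∃ z, SingleValuedAt Φ z

/-- `X` is strong `𝒞`-Stegall. -/
def IsStrongStegallFor (P : SpaceClass.{u}) (X : Type v) [TopologicalSpace X] : Prop :=
  ∀ (Z : Type u) [tZ : TopologicalSpace Z], P Z tZ →
    ∀ Φ : Z → Set X, IsMinimalUsco Φ → {z | SingleValuedAt Φ z} ∈ residual Z

/-- The class of all Baire spaces (in universe `u`). -/
def BaireClass : SpaceClass.{u} := fun Z tZ => @BaireSpace Z tZ

/-- `X` is Piotrowski. -/
def IsPiotrowski (X : Type v) [TopologicalSpace X] : Prop :=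
  IsPiotrowskiFor BaireClass.{u} X

/-- `d` is a metric on `X` (not necessarily related to the topology of `X`). -/
structure IsMetric {X : Type*} (d : X → X → ℝ) : Prop where
  self : ∀ x, d x x = 0
  eq_of : ∀ x y, d x y = 0 → x = y
  symm : ∀ x y, d x y = d y x
  triangle : ∀ x y z, d x z ≤ d x y + d y z

/-- `X` is fragmented by `d`: every nonempty subset has a nonempty relatively open subset of
`d`-diameter `< ε`. -/
def FragmentedBy (X : Type*) [TopologicalSpace X] (d : X → X → ℝ) : Prop :=
  ∀ ε : ℝ, 0 < ε → ∀ A : Set X, A.Nonempty →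
    ∃ V : Set X, IsOpen V ∧ (A ∩ V).Nonempty ∧ ∀ x ∈ A ∩ V, ∀ y ∈ A ∩ V, d x y < ε

/-- The topology generated by `d` is finer than the topology of `X`. -/
def MetricTopFiner (X : Type*) [TopologicalSpace X] (d : X → X → ℝ) : Prop :=
  ∀ U : Set X, IsOpen U → ∀ x ∈ U, ∃ ε : ℝ, 0 < ε ∧ {y | d x y < ε} ⊆ U

/-- `X` is fragmentable. -/
def Fragmentable (X : Type*) [TopologicalSpace X] : Prop :=
  ∃ d : X → X → ℝ, IsMetric d ∧ FragmentedBy X d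

/-- `X` is strictly fragmented by the metric `d`. -/
def StrictlyFragmentedBy (X : Type*) [TopologicalSpace X] (d : X → X → ℝ) : Prop :=
  IsMetric d ∧ FragmentedBy X d ∧ MetricTopFiner X d

/-- `X` is strictly fragmentable. -/
def StrictlyFragmentable (X : Type*) [TopologicalSpace X] : Prop :=
  ∃ d : X → X → ℝ, StrictlyFragmentedBy X d

/-- The countable family `𝒰` separates the points of `S` from the points of `Sᶜ`:
some member of the family contains exactly one point of any pair `x ∈ S`, `y ∉ S`. -/
def SeparatesFrom {K : Type*} (𝒰 : ℕ → Set K) (S : Set K) : Prop :=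
  ∀ x ∈ S, ∀ y ∈ Sᶜ, ∃ n, (x ∈ 𝒰 n ∧ y ∉ 𝒰 n) ∨ (x ∉ 𝒰 n ∧ y ∈ 𝒰 n)

/-- `X` has countable separation: some compactification `K` of `X` carries a countable family
of open sets separating the points of (the copy of) `X` from the points of `K \ X`. -/
def HasCountableSeparation (X : Type u) [TopologicalSpace X] : Prop :=
  ∃ (K : Type u) (tK : TopologicalSpace K), @CompactSpace K tK ∧ @T2Space K tK ∧
    ∃ e : X → K, @Topology.IsEmbedding X K _ tK e ∧ @DenseRange K tK X e ∧
      ∃ 𝒰 : ℕ → Set K, (∀ n, @IsOpen K tK (𝒰 n)) ∧ SeparatesFrom 𝒰 (Set.range e)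

/-- Auxiliary: the metric space structure on a bare type coming from `IsMetric`. -/
def fragMetricSpace {Y : Type*} (d : Y → Y → ℝ) (h : IsMetric d) : MetricSpace Y where
  dist := d
  dist_self := h.self
  dist_comm := h.symm
  dist_triangle := h.triangle
  eq_of_dist_eq_zero {x y} := h.eq_of x y

/-- Auxiliary: the topology of `fragMetricSpace` is generated by the `d`-balls. -/
lemma fragMetric_top_eq {Y : Type*} (d : Y → Y → ℝ) (h : IsMetric d) :
    (fragMetricSpace d h).toUniformSpace.toTopologicalSpace =
      TopologicalSpace.generateFrom
        {B : Set Y | ∃ x : Y, ∃ ε : ℝ, 0 < ε ∧ B = {y | d x y < ε}} := by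
  letI := fragMetricSpace d h
  refine (TopologicalSpace.isTopologicalBasis_of_isOpen_of_nhds ?_ ?_).eq_generateFrom
  · rintro B ⟨x, ε, hε, rfl⟩
    have hB : {y | d x y < ε} = Metric.ball x ε := by
      ext y
      simp only [Metric.mem_ball, Set.mem_setOf_eq]
      rw [h.symm x y]
      exact Iff.rfl
    rw [hB]
    exact Metric.isOpen_ball
  · intro a u hau hu
    obtain ⟨ε, hε, hball⟩ := Metric.isOpen_iff.1 hu a hau
    refine ⟨{y | d a y < ε}, ⟨a, ε, hε, rfl⟩, ?_, fun y hy => hball ?_⟩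
    · show d a a < ε
      rw [h.self]; exact hε
    · show dist y a < ε
      have : d a y < ε := hy
      rw [h.symm a y] at this
      exact this

/-- Auxiliary: any subset, with the topology induced from the `d`-ball topology,
is metrizable. -/
lemma frag_metrizable {Y : Type*} (d : Y → Y → ℝ) (h : IsMetric d) (G : Set Y) :
    @TopologicalSpace.MetrizableSpace ↥G
      (TopologicalSpace.induced (Subtype.val : ↥G → Y)
        (TopologicalSpace.generateFrom
          {B : Set Y | ∃ x : Y, ∃ ε : ℝ, 0 < ε ∧ B = {y | d x y < ε}})) := by
  letI m : MetricSpace ↥G :=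
    (fragMetricSpace d h).induced (Subtype.val : ↥G → Y) Subtype.val_injective
  have hm : m.toUniformSpace.toTopologicalSpace =
      TopologicalSpace.induced (Subtype.val : ↥G → Y)
        (TopologicalSpace.generateFrom
          {B : Set Y | ∃ x : Y, ∃ ε : ℝ, 0 < ε ∧ B = {y | d x y < ε}}) := by
    rw [← fragMetric_top_eq d h]
    exact UniformSpace.toTopologicalSpace_comap
  rw [← hm]
  infer_instance

/-- Every Baire space `X` which is strictly fragmented by a metric `d`
contains a dense `Gδ`-subset `G` which is metrizable in the subspace topology; in fact the
subspace topology of `G` coincides with the topology generated by the fragmenting metric `d`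
restricted to `G`. -/
theorem baire_strictlyFragmentable_dense_metrizable_Gdelta (X : Type u)
    [tX : TopologicalSpace X] [BaireSpace X] (d : X → X → ℝ)
    (hd : StrictlyFragmentedBy X d) :
    ∃ G : Set X, IsGδ G ∧ Dense G ∧ TopologicalSpace.MetrizableSpace ↥G ∧
      (inferInstance : TopologicalSpace ↥G) =
        TopologicalSpace.induced (Subtype.val : ↥G → X)
          (TopologicalSpace.generateFrom
            {B : Set X | ∃ x : X, ∃ ε : ℝ, 0 < ε ∧ B = {y | d x y < ε}}) := by
  obtain ⟨hm, hfrag, hfiner⟩ := hd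
  set S : Set (Set X) := {B : Set X | ∃ x : X, ∃ ε : ℝ, 0 < ε ∧ B = {y | d x y < ε}} with hS
  -- the open sets of small diameter
  set O : ℕ → Set X := fun n =>
    ⋃₀ {U : Set X | IsOpen U ∧ ∀ x ∈ U, ∀ y ∈ U, d x y < 1 / (n + 1)} with hO
  have hOopen : ∀ n, IsOpen (O n) := fun n =>
    isOpen_sUnion fun U hU => hU.1
  have hOdense : ∀ n, Dense (O n) := by
    intro n
    rw [dense_iff_inter_open]
    intro W hW hWne
    obtain ⟨V, hV, hVne, hVdiam⟩ :=
      hfrag (1 / (n + 1)) (by positivity) W hWne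
    obtain ⟨z, hz⟩ := hVne
    refine ⟨z, hz.1, ?_⟩
    exact ⟨W ∩ V, ⟨hW.inter hV, hVdiam⟩, hz⟩
  set G : Set X := ⋂ n, O n with hG
  have hGδ : IsGδ G := IsGδ.iInter_of_isOpen hOopen
  have hGdense : Dense G := dense_iInter_of_isOpen hOopen hOdense
  -- key claim: points of G have small open neighborhoods inside balls
  have key : ∀ (x : X) (ε : ℝ), 0 < ε → ∀ g ∈ G, d x g < ε →
      ∃ U : Set X, IsOpen U ∧ g ∈ U ∧ U ⊆ {y | d x y < ε} := by
    intro x ε hε g hg hdg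
    obtain ⟨n, hn⟩ := exists_nat_one_div_lt (show (0:ℝ) < ε - d x g by linarith)
    have hgO : g ∈ O n := Set.mem_iInter.1 hg n
    obtain ⟨U, ⟨hU, hUdiam⟩, hgU⟩ := hgO
    refine ⟨U, hU, hgU, fun y hy => ?_⟩
    have h1 : d g y < 1 / (n + 1) := hUdiam g hgU y hy
    have h2 : d x y ≤ d x g + d g y := hm.triangle x g y
    show d x y < ε
    linarith
  -- topology equality
  have heq : (inferInstance : TopologicalSpace ↥G) =
      TopologicalSpace.induced (Subtype.val : ↥G → X) (TopologicalSpace.generateFrom S) := by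
    apply le_antisymm
    · -- induced tX ≤ induced td : each generating preimage is open in the subspace
      rw [induced_generateFrom_eq]
      apply le_generateFrom
      rintro B ⟨B', ⟨x, ε, hε, rfl⟩, rfl⟩
      rw [isOpen_induced_iff]
      refine ⟨⋃₀ {U : Set X | IsOpen U ∧ U ⊆ {y | d x y < ε}},
        isOpen_sUnion fun U hU => hU.1, ?_⟩
      apply Set.eq_of_subset_of_subset
      · rintro g hg
        obtain ⟨U, hU, hgU⟩ := hg
        exact hU.2 hgU
      · rintro g hg
        obtain ⟨U, hUo, hgU, hUsub⟩ := key x ε hε g.1 g.2 hg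
        exact ⟨U, ⟨hUo, hUsub⟩, hgU⟩
    · -- induced td ≤ induced tX : td is finer than tX
      apply induced_mono
      intro U hU
      -- hU : IsOpen[tX] U ; goal : td-open U
      have : U = ⋃₀ {B : Set X | B ∈ S ∧ B ⊆ U} := by
        apply Set.eq_of_subset_of_subset
        · intro x hx
          obtain ⟨ε, hε, hball⟩ := hfiner U hU x hx
          refine ⟨{y | d x y < ε}, ⟨⟨x, ε, hε, rfl⟩, hball⟩, ?_⟩
          show d x x < ε
          rw [hm.self]; exact hε
        · rintro x ⟨B, ⟨_, hBU⟩, hxB⟩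
          exact hBU hxB
      have hop : @IsOpen X (TopologicalSpace.generateFrom S)
          (⋃₀ {B : Set X | B ∈ S ∧ B ⊆ U}) :=
        @isOpen_sUnion X (TopologicalSpace.generateFrom S) _
          fun B hB => TopologicalSpace.GenerateOpen.basic B hB.1
      exact this ▸ hop
  refine ⟨G, hGδ, hGdense, ?_, heq⟩
  have := frag_metrizable d hm G
  rw [← hS] at this
  rw [show (instTopologicalSpaceSubtype : TopologicalSpace ↥G) =
    TopologicalSpace.induced (Subtype.val : ↥G → X) (TopologicalSpace.generateFrom S) from heq]
  exact this
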